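/- (Conjugation Theorem, forward direction) Suppose ℳ_X and ℳ_Z are minimal exponential families, f_{X|Z}(·|z) ∈ ℳ_X for each z, and ℳ_Z is a conjugate prior family for f_{X|Z} (i.e., for every prior q_Z ∈ ℳ_Z, the Bayes posterior lies in ℳ_Z). Assume also that there exists a joint density q_{XZ} = f_{X|Z} · q_Z for some q_Z ∈ ℳ_Z. Then f_{X|Z} has the form f_{X|Z}(x|z) = exp(s_X(x)·(θ_X + Θ_{XZ}·s_Z(z)) − s_Z(z)·ρ − χ) for some parameters θ_X, Θ_{XZ}, ρ, χ. -/

import Mathlib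

open MeasureTheory Matrix

/-- Conjugation Theorem, forward direction: Suppose `ℳ_X` and
`ℳ_Z` are minimal exponential families, `f (·|z) ∈ ℳ_X` for each `z` (with
natural parameters `θfun z`), and `ℳ_Z` is a conjugate prior family for `f`
(for every prior in `ℳ_Z` the Bayes posterior lies in `ℳ_Z`).  Assume also
that a joint density `f · qZ` exists for some prior `qZ ∈ ℳ_Z`.  Then `f`
has the form
`f x z = exp (sX x ⬝ (θX + Θ ⬝ sZ z) − sZ z ⬝ ρ − χ)`
for some parameters `θX, Θ, ρ, χ`. -/
theorem conjugation_theorem_forward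
    {𝒳 𝒵 : Type*} [MeasurableSpace 𝒳] [MeasurableSpace 𝒵]
    (μX : Measure 𝒳) [SigmaFinite μX] (μZ : Measure 𝒵) [SigmaFinite μZ]
    (dX dZ : ℕ) (sX : 𝒳 → (Fin dX → ℝ)) (sZ : 𝒵 → (Fin dZ → ℝ))
    (ψX : (Fin dX → ℝ) → ℝ)
    (hψX : ∀ η, ψX η = Real.log (∫ x, Real.exp (sX x ⬝ᵥ η) ∂μX))
    (ψZ : (Fin dZ → ℝ) → ℝ)
    (hψZ : ∀ η, ψZ η = Real.log (∫ z, Real.exp (sZ z ⬝ᵥ η) ∂μZ))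
    (hintX : ∀ η, Integrable (fun x => Real.exp (sX x ⬝ᵥ η)) μX)
    (hposX : ∀ η, 0 < ∫ x, Real.exp (sX x ⬝ᵥ η) ∂μX)
    (hintZ : ∀ η, Integrable (fun z => Real.exp (sZ z ⬝ᵥ η)) μZ)
    (hposZ : ∀ η, 0 < ∫ z, Real.exp (sZ z ⬝ᵥ η) ∂μZ)
    -- minimality: components of the sufficient statistics together with the
    -- constant 1 are linearly independent as functions
    (hminX : ∀ (c : Fin dX → ℝ) (b : ℝ), (∀ x, sX x ⬝ᵥ c + b = 0) → c = 0 ∧ b = 0)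
    (hminZ : ∀ (c : Fin dZ → ℝ) (b : ℝ), (∀ z, sZ z ⬝ᵥ c + b = 0) → c = 0 ∧ b = 0)
    -- the likelihood: f (·|z) ∈ ℳ_X with natural parameters θfun z
    (f : 𝒳 → 𝒵 → ℝ) (θfun : 𝒵 → (Fin dX → ℝ))
    (hf : ∀ x z, f x z = Real.exp (sX x ⬝ᵥ θfun z - ψX (θfun z)))
    -- existence of a joint density f · qZ for some prior qZ ∈ ℳ_Z
    (θZ0 : Fin dZ → ℝ)
    (hjoint : Integrable (fun p : 𝒳 × 𝒵 =>
      f p.1 p.2 * Real.exp (sZ p.2 ⬝ᵥ θZ0 - ψZ θZ0)) (μX.prod μZ))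
    -- ℳ_Z is a conjugate prior family for f: for every prior in ℳ_Z, the
    -- Bayes posterior lies in ℳ_Z
    (hconjprior : ∀ (θZstar : Fin dZ → ℝ) (x : 𝒳), ∃ η : Fin dZ → ℝ,
      ∀ z, f x z * Real.exp (sZ z ⬝ᵥ θZstar - ψZ θZstar)
          / (∫ z', f x z' * Real.exp (sZ z' ⬝ᵥ θZstar - ψZ θZstar) ∂μZ)
        = Real.exp (sZ z ⬝ᵥ η - ψZ η)) :
    ∃ (θX : Fin dX → ℝ) (Θ : Matrix (Fin dX) (Fin dZ) ℝ)
      (ρ : Fin dZ → ℝ) (χ : ℝ),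
      ∀ x z, f x z =
        Real.exp (sX x ⬝ᵥ (θX + Θ.mulVec (sZ z)) - sZ z ⬝ᵥ ρ - χ) := by
  classical
  -- Step 1: for each x, the log-likelihood is affine in sZ z
  have step1 : ∀ x : 𝒳, ∃ (c : Fin dZ → ℝ) (b : ℝ),
      ∀ z, sX x ⬝ᵥ θfun z - ψX (θfun z) = sZ z ⬝ᵥ c + b := by
    intro x
    obtain ⟨η, hη⟩ := hconjprior 0 x
    set I := ∫ z', f x z' * Real.exp (sZ z' ⬝ᵥ (0 : Fin dZ → ℝ) - ψZ 0) ∂μZ with hIdef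
    refine ⟨η, Real.log I - ψZ η + ψZ 0, fun z => ?_⟩
    have h := hη z
    have hfpos : 0 < f x z * Real.exp (sZ z ⬝ᵥ (0 : Fin dZ → ℝ) - ψZ 0) := by
      rw [hf]; positivity
    have h2 : 0 < f x z * Real.exp (sZ z ⬝ᵥ (0 : Fin dZ → ℝ) - ψZ 0) / I := by
      rw [h]; exact Real.exp_pos _
    have hIpos : 0 < I := by
      rcases div_pos_iff.mp h2 with ⟨_, hI⟩ | ⟨hneg, _⟩
      · exact hI
      · linarith
    have heq : f x z * Real.exp (sZ z ⬝ᵥ (0 : Fin dZ → ℝ) - ψZ 0)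
        = Real.exp (sZ z ⬝ᵥ η - ψZ η) * I := by
      exact (div_eq_iff hIpos.ne').mp h
    rw [hf, ← Real.exp_add, show I = Real.exp (Real.log I) from (Real.exp_log hIpos).symm,
      ← Real.exp_add] at heq
    have := Real.exp_injective heq
    simp only [dotProduct_zero] at this ⊢
    linarith
  -- Step 2: the set of linear functionals of (θfun z, -ψX (θfun z)) affine in sZ z
  let M : Submodule ℝ (EuclideanSpace ℝ (Fin (dX + 1))) :=
    { carrier := {w | ∃ (c : Fin dZ → ℝ) (b : ℝ), ∀ z,
        (∑ i : Fin dX, w i.castSucc * θfun z i) - w (Fin.last dX) * ψX (θfun z)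
          = sZ z ⬝ᵥ c + b}
      add_mem' := by
        rintro u v ⟨c1, b1, h1⟩ ⟨c2, b2, h2⟩
        refine ⟨c1 + c2, b1 + b2, fun z => ?_⟩
        have e1 := h1 z; have e2 := h2 z
        simp only [PiLp.add_apply, add_mul, Finset.sum_add_distrib, dotProduct_add]
        linarith
      zero_mem' := by
        refine ⟨0, 0, fun z => ?_⟩
        simp
      smul_mem' := by
        rintro a w ⟨c, b, hcb⟩
        refine ⟨a • c, a * b, fun z => ?_⟩
        have := hcb z
        simp only [PiLp.smul_apply, smul_eq_mul, dotProduct_smul]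
        have hs : (∑ i : Fin dX, a * w i.castSucc * θfun z i)
            = a * ∑ i : Fin dX, w i.castSucc * θfun z i := by
          rw [Finset.mul_sum]; exact Finset.sum_congr rfl fun i _ => by ring
        rw [hs]
        linear_combination a * this }
  -- each (sX x, 1) lies in M, by step 1
  have hmem : ∀ x : 𝒳,
      (show EuclideanSpace ℝ (Fin (dX + 1)) from WithLp.toLp 2 (Fin.snoc (sX x) 1 : Fin (dX + 1) → ℝ)) ∈ M := by
    intro x
    obtain ⟨c, b, hcb⟩ := step1 x
    refine ⟨c, b, fun z => ?_⟩
    have := hcb z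
    simpa [Fin.snoc_castSucc, Fin.snoc_last, dotProduct] using this
  -- minimality of sX implies M = ⊤
  have hMtop : M = ⊤ := by
    rw [← Submodule.orthogonal_eq_bot_iff, Submodule.eq_bot_iff]
    intro w hw
    rw [Submodule.mem_orthogonal] at hw
    have hw' : ∀ x : 𝒳, sX x ⬝ᵥ (fun i => w i.castSucc) + w (Fin.last dX) = 0 := by
      intro x
      have h := hw _ (hmem x)
      rw [PiLp.inner_apply] at h
      simp only [RCLike.inner_apply, conj_trivial] at h
      rw [Fin.sum_univ_castSucc] at h
      simpa [Fin.snoc_castSucc, Fin.snoc_last, dotProduct, mul_comm] using h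
    obtain ⟨hc, hb⟩ := hminX _ _ hw'
    refine PiLp.ext fun i => ?_
    refine Fin.lastCases ?_ ?_ i
    · exact hb
    · exact fun j => congrFun hc j
  -- extract affine representations of θfun components and of ψX ∘ θfun
  have hrow : ∀ i : Fin dX, ∃ (c : Fin dZ → ℝ) (b : ℝ),
      ∀ z, θfun z i = sZ z ⬝ᵥ c + b := by
    intro i
    have hm : (show EuclideanSpace ℝ (Fin (dX + 1)) from
        WithLp.toLp 2 (Fin.snoc (Pi.single i 1) 0 : Fin (dX + 1) → ℝ)) ∈ M := hMtop ▸ Submodule.mem_top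
    obtain ⟨c, b, hcb⟩ := hm
    refine ⟨c, b, fun z => ?_⟩
    have := hcb z
    simpa [Fin.snoc_castSucc, Fin.snoc_last, Pi.single_apply, ite_mul,
      Finset.sum_ite_eq] using this
  have hlast : ∃ (c : Fin dZ → ℝ) (b : ℝ),
      ∀ z, -ψX (θfun z) = sZ z ⬝ᵥ c + b := by
    have hm : (show EuclideanSpace ℝ (Fin (dX + 1)) from
        WithLp.toLp 2 (Fin.snoc 0 1 : Fin (dX + 1) → ℝ)) ∈ M := hMtop ▸ Submodule.mem_top
    obtain ⟨c, b, hcb⟩ := hm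
    refine ⟨c, b, fun z => ?_⟩
    have := hcb z
    simpa [Fin.snoc_castSucc, Fin.snoc_last] using this
  choose C B hCB using hrow
  obtain ⟨cψ, bψ, hψ⟩ := hlast
  refine ⟨B, Matrix.of (fun i j => C i j), -cψ, -bψ, fun x z => ?_⟩
  have hθ : θfun z = B + (Matrix.of fun i j => C i j).mulVec (sZ z) := by
    funext i
    rw [hCB i z]
    simp only [Pi.add_apply, Matrix.mulVec, Matrix.of_apply, dotProduct]
    rw [add_comm]
    congr 1
    exact Finset.sum_congr rfl fun j _ => mul_comm _ _
  rw [hf]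
  congr 1
  have h1 : sX x ⬝ᵥ θfun z
      = sX x ⬝ᵥ (B + (Matrix.of fun i j => C i j).mulVec (sZ z)) := by rw [← hθ]
  have h2 := hψ z
  simp only [dotProduct_neg]
  linarith
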